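/- arXiv:1305.0931 — 7 statements merged into one kernel-verified Lean document; each statement's English description precedes it below -/
import Mathlib

section
/- Let Δ be a simplicial complex on [n] that is not a cone over any vertex (equivalently, every variable x_i divides some minimal monomial generator of the Stanley–Reisner ideal I_Δ). Then the colon ideal I_Δ^[2] : I_Δ equals I_Δ^[2] + (x_1 x_2 ⋯ x_n) if and only if Δ has no free face. -/
open MvPowerSeries Finset

/-- A simplicial complex on `[n]`: contains `∅` and is closed under taking subsets. -/
def IsSimplicialComplex {n : ℕ} (Δ : Set (Finset (Fin n))) : Prop :=
  ∅ ∈ Δ ∧ ∀ F ∈ Δ, ∀ G, G ⊆ F → G ∈ Δ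

/-- A facet: a face maximal with respect to inclusion. -/
def IsFacet {n : ℕ} (Δ : Set (Finset (Fin n))) (G : Finset (Fin n)) : Prop :=
  G ∈ Δ ∧ ∀ H ∈ Δ, G ⊆ H → H = G

/-- A free face: a face `F` such that `F ∪ {i}` is a facet for some `i ∉ F` and
`F ∪ {i}` is the unique facet containing `F`. -/
def IsFreeFace {n : ℕ} (Δ : Set (Finset (Fin n))) (F : Finset (Fin n)) : Prop :=
  F ∈ Δ ∧ ∃ i ∉ F, IsFacet Δ (insert i F) ∧
    ∀ G, IsFacet Δ G → F ⊆ G → G = insert i F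

/-- The Stanley–Reisner ideal `I_Δ` in `S = K[[x_1, …, x_n]]`. -/
noncomputable def SRIdeal (K : Type*) [Field K] {n : ℕ} (Δ : Set (Finset (Fin n))) :
    Ideal (MvPowerSeries (Fin n) K) :=
  Ideal.span ((fun F : Finset (Fin n) => ∏ i ∈ F, (X i : MvPowerSeries (Fin n) K)) ''
    {F | F ∉ Δ})

/-- The second Frobenius power `I_Δ^[2]` in `S = K[[x_1, …, x_n]]`. -/
noncomputable def SRIdeal2 (K : Type*) [Field K] {n : ℕ} (Δ : Set (Finset (Fin n))) :
    Ideal (MvPowerSeries (Fin n) K) :=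
  Ideal.span ((fun F : Finset (Fin n) => ∏ i ∈ F, (X i : MvPowerSeries (Fin n) K) ^ 2) ''
    {F | F ∉ Δ})

namespace SRAux

variable {n : ℕ} {K : Type*} [Field K]

noncomputable def dF (F : Finset (Fin n)) : Fin n →₀ ℕ := ∑ i ∈ F, Finsupp.single i 1
noncomputable def d2F (F : Finset (Fin n)) : Fin n →₀ ℕ := ∑ i ∈ F, Finsupp.single i 2

lemma dF_apply (F : Finset (Fin n)) (j : Fin n) : dF F j = if j ∈ F then 1 else 0 := by
  classical
  simp [dF, Finsupp.finset_sum_apply, Finsupp.single_apply]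

lemma d2F_apply (F : Finset (Fin n)) (j : Fin n) : d2F F j = if j ∈ F then 2 else 0 := by
  classical
  simp [d2F, Finsupp.finset_sum_apply, Finsupp.single_apply]

lemma prod_X_eq (F : Finset (Fin n)) :
    (∏ i ∈ F, (X i : MvPowerSeries (Fin n) K)) = monomial (dF F) 1 := by
  classical
  induction F using Finset.induction_on with
  | empty => simp [dF]
  | insert _ _ h ih =>
      rw [Finset.prod_insert h, ih,
        show (X _ : MvPowerSeries (Fin n) K) = monomial (Finsupp.single _ 1) 1 from by
          rw [← X_pow_eq, pow_one], monomial_mul_monomial, one_mul]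
      simp only [dF, Finset.sum_insert h]

lemma prod_X_sq_eq (F : Finset (Fin n)) :
    (∏ i ∈ F, (X i : MvPowerSeries (Fin n) K) ^ 2) = monomial (d2F F) 1 := by
  classical
  induction F using Finset.induction_on with
  | empty => simp [d2F]
  | insert _ _ h ih =>
      rw [Finset.prod_insert h, ih, X_pow_eq, monomial_mul_monomial, one_mul]
      simp only [d2F, Finset.sum_insert h]

lemma mem_span_monomials (D : Finset (Fin n →₀ ℕ)) (f : MvPowerSeries (Fin n) K) :
    f ∈ Ideal.span ((fun d => (monomial d 1 : MvPowerSeries (Fin n) K)) '' ↑D) ↔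
      ∀ e, coeff e f ≠ 0 → ∃ d ∈ D, d ≤ e := by
  constructor
  · intro hf e he
    rw [Ideal.span, Submodule.mem_span_set] at hf
    obtain ⟨c, hsupp, rfl⟩ := hf
    rw [Finsupp.sum, map_sum] at he
    obtain ⟨m, hm, hne⟩ := Finset.exists_ne_zero_of_sum_ne_zero he
    obtain ⟨d, hd, rfl⟩ := hsupp hm
    rw [smul_eq_mul, coeff_mul_monomial] at hne
    by_cases hle : d ≤ e
    · exact ⟨d, hd, hle⟩
    · simp [hle] at hne
  · intro h
    classical
    have hjex : ∀ e : Fin n →₀ ℕ, coeff e f ≠ 0 → ∃ d, d ∈ D ∧ d ≤ e := by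
      intro e he; obtain ⟨d, hd, hle⟩ := h e he; exact ⟨d, hd, hle⟩
    set j : (Fin n →₀ ℕ) → (Fin n →₀ ℕ) := fun e =>
      if he : ∃ d, d ∈ D ∧ d ≤ e then he.choose else 0 with hjdef
    have hjspec : ∀ e, coeff e f ≠ 0 → j e ∈ D ∧ j e ≤ e := by
      intro e he
      have hex := hjex e he
      simp only [hjdef, dif_pos hex]
      exact hex.choose_spec
    set g : (Fin n →₀ ℕ) → MvPowerSeries (Fin n) K := fun d e' =>
      if j (e' + d) = d then coeff (e' + d) f else 0 with hgdef
    have hgcoeff : ∀ d e', coeff e' (g d) = if j (e' + d) = d then coeff (e' + d) f else 0 :=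
      fun d e' => rfl
    have hfeq : f = ∑ d ∈ D, g d * monomial d 1 := by
      ext e
      rw [map_sum]
      by_cases hce : coeff e f = 0
      · rw [hce]
        refine (Finset.sum_eq_zero ?_).symm
        intro d _
        rw [coeff_mul_monomial]
        split_ifs with hle
        · rw [hgcoeff, tsub_add_cancel_of_le hle]
          split_ifs with h2
          · rw [hce, zero_mul]
          · rw [zero_mul]
        · rfl
      · obtain ⟨hjD, hjle⟩ := hjspec e hce
        rw [Finset.sum_eq_single_of_mem (j e) hjD]
        · rw [coeff_mul_monomial, if_pos hjle, hgcoeff, tsub_add_cancel_of_le hjle,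
            if_pos rfl, mul_one]
        · intro d hd hne
          rw [coeff_mul_monomial]
          split_ifs with hle
          · rw [hgcoeff, tsub_add_cancel_of_le hle, if_neg (fun hh => hne hh.symm), zero_mul]
          · rfl
    rw [hfeq]
    refine Ideal.sum_mem _ ?_
    intro d hd
    exact Ideal.mul_mem_left _ _ (Ideal.subset_span ⟨d, by simpa using hd, rfl⟩)

lemma mem_colon_span {R : Type*} [CommRing R] (N : Ideal R) (S : Set R) (r : R) :
    r ∈ Submodule.colon N (Ideal.span S) ↔ ∀ s ∈ S, r * s ∈ N := by
  rw [Submodule.mem_colon]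
  constructor
  · intro h s hs
    simpa [smul_eq_mul] using h s (Ideal.subset_span hs)
  · intro h p hp
    induction hp using Submodule.span_induction with
    | mem x hx => simpa [smul_eq_mul] using h x hx
    | zero => simp
    | add x y _ _ hx hy => rw [smul_add]; exact N.add_mem hx hy
    | smul c x _ hx => rw [smul_comm]; exact N.smul_mem c hx

variable (K) (Δ : Set (Finset (Fin n)))

noncomputable def NF (Δ : Set (Finset (Fin n))) : Finset (Finset (Fin n)) := by
  classical exact univ.filter (· ∉ Δ)

lemma mem_NF (F : Finset (Fin n)) : F ∈ NF Δ ↔ F ∉ Δ := by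
  simp [NF]

lemma SRIdeal2_eq :
    SRIdeal2 K Δ =
      Ideal.span ((fun d => (monomial d 1 : MvPowerSeries (Fin n) K)) '' ↑((NF Δ).image d2F)) := by
  rw [SRIdeal2]
  congr 1
  ext g
  simp only [Set.mem_image, Set.mem_setOf_eq, Finset.coe_image, mem_coe, mem_NF, prod_X_sq_eq]
  constructor
  · rintro ⟨F, hF, rfl⟩
    exact ⟨d2F F, ⟨F, hF, rfl⟩, rfl⟩
  · rintro ⟨d, ⟨F, hF, rfl⟩, rfl⟩
    exact ⟨F, hF, rfl⟩

lemma mem_SRIdeal2_iff (f : MvPowerSeries (Fin n) K) :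
    f ∈ SRIdeal2 K Δ ↔ ∀ e, coeff e f ≠ 0 → ∃ G ∉ Δ, d2F G ≤ e := by
  rw [SRIdeal2_eq, mem_span_monomials]
  constructor
  · intro h e he
    obtain ⟨d, hd, hle⟩ := h e he
    obtain ⟨G, hG, rfl⟩ := Finset.mem_image.1 hd
    exact ⟨G, (mem_NF Δ G).1 hG, hle⟩
  · intro h e he
    obtain ⟨G, hG, hle⟩ := h e he
    exact ⟨d2F G, Finset.mem_image.2 ⟨G, (mem_NF Δ G).2 hG, rfl⟩, hle⟩

lemma mem_RHS_iff (f : MvPowerSeries (Fin n) K) :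
    f ∈ SRIdeal2 K Δ ⊔ Ideal.span {∏ i : Fin n, (X i : MvPowerSeries (Fin n) K)} ↔
      ∀ e, coeff e f ≠ 0 → (∃ G ∉ Δ, d2F G ≤ e) ∨ dF Finset.univ ≤ e := by
  rw [SRIdeal2_eq, prod_X_eq, ← Ideal.span_union,
    show ((fun d => (monomial d 1 : MvPowerSeries (Fin n) K)) '' ↑((NF Δ).image d2F)) ∪
        {monomial (dF Finset.univ) 1} =
      (fun d => (monomial d 1 : MvPowerSeries (Fin n) K)) ''
        ↑(((NF Δ).image d2F) ∪ {dF Finset.univ}) from by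
      rw [Finset.coe_union, Set.image_union, Finset.coe_singleton, Set.image_singleton],
    mem_span_monomials]
  constructor
  · intro h e he
    obtain ⟨d, hd, hle⟩ := h e he
    rcases Finset.mem_union.1 hd with hd | hd
    · obtain ⟨G, hG, rfl⟩ := Finset.mem_image.1 hd
      exact Or.inl ⟨G, (mem_NF Δ G).1 hG, hle⟩
    · rw [Finset.mem_singleton] at hd
      subst hd
      exact Or.inr hle
  · intro h e he
    rcases h e he with ⟨G, hG, hle⟩ | hle
    · exact ⟨d2F G, Finset.mem_union.2 (Or.inl (Finset.mem_image.2 ⟨G, (mem_NF Δ G).2 hG, rfl⟩)), hle⟩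
    · exact ⟨dF Finset.univ, Finset.mem_union.2 (Or.inr (Finset.mem_singleton.2 rfl)), hle⟩

lemma mem_colon_iff (f : MvPowerSeries (Fin n) K) :
    f ∈ Submodule.colon (SRIdeal2 K Δ) (SRIdeal K Δ) ↔
      ∀ e, coeff e f ≠ 0 → ∀ F ∉ Δ, ∃ G ∉ Δ, d2F G ≤ e + dF F := by
  rw [SRIdeal, mem_colon_span]
  constructor
  · intro h e he F hF
    have h1 := h _ ⟨F, hF, rfl⟩
    simp only [prod_X_eq] at h1
    rw [mem_SRIdeal2_iff] at h1
    refine h1 (e + dF F) ?_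
    rw [coeff_add_mul_monomial, mul_one]
    exact he
  · rintro h s ⟨F, hF, rfl⟩
    simp only [prod_X_eq]
    rw [mem_SRIdeal2_iff]
    intro e' he'
    rw [coeff_mul_monomial] at he'
    by_cases hle : dF F ≤ e'
    · rw [if_pos hle, mul_one] at he'
      obtain ⟨G, hG, hGle⟩ := h (e' - dF F) he' F hF
      exact ⟨G, hG, by rwa [tsub_add_cancel_of_le hle] at hGle⟩
    · rw [if_neg hle] at he'
      exact absurd rfl he'

lemma ideal_eq_iff :
    (Submodule.colon (SRIdeal2 K Δ) (SRIdeal K Δ) =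
      SRIdeal2 K Δ ⊔ Ideal.span {∏ i : Fin n, (X i : MvPowerSeries (Fin n) K)}) ↔
    ∀ e : Fin n →₀ ℕ, (∀ F ∉ Δ, ∃ G ∉ Δ, d2F G ≤ e + dF F) →
      ((∃ G ∉ Δ, d2F G ≤ e) ∨ dF Finset.univ ≤ e) := by
  constructor
  · intro heq e hPe
    have hm : (monomial e 1 : MvPowerSeries (Fin n) K) ∈
        Submodule.colon (SRIdeal2 K Δ) (SRIdeal K Δ) := by
      rw [mem_colon_iff]
      intro e' he' F hF
      have : e' = e := by
        by_contra hne
        rw [coeff_monomial_ne hne] at he'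
        exact he' rfl
      subst this
      exact hPe F hF
    rw [heq, mem_RHS_iff] at hm
    refine hm e ?_
    rw [coeff_monomial_same]
    exact one_ne_zero
  · intro himp
    apply le_antisymm
    · intro f hf
      rw [mem_colon_iff] at hf
      rw [mem_RHS_iff]
      intro e he
      exact himp e (fun F hF => hf e he F hF)
    · intro f hf
      rw [mem_RHS_iff] at hf
      rw [mem_colon_iff]
      intro e he F hF
      rcases hf e he with ⟨G, hG, hle⟩ | hle
      · exact ⟨G, hG, hle.trans le_self_add⟩
      · refine ⟨F, hF, ?_⟩
        rw [Finsupp.le_def]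
        intro i
        rw [Finsupp.add_apply, d2F_apply, dF_apply]
        have h1 : (1 : ℕ) ≤ e i := by
          have := (Finsupp.le_def.1 hle) i
          rwa [dF_apply, if_pos (Finset.mem_univ i)] at this
        split_ifs with hi
        · omega
        · omega


variable {Δ : Set (Finset (Fin n))}

lemma exists_facet (hΔ : IsSimplicialComplex Δ) {F : Finset (Fin n)} (hF : F ∈ Δ) :
    ∃ G, IsFacet Δ G ∧ F ⊆ G := by
  have hfin : {G : Finset (Fin n) | G ∈ Δ ∧ F ⊆ G}.Finite := Set.toFinite _
  obtain ⟨G, hGm⟩ := hfin.exists_maximal ⟨F, hF, subset_rfl⟩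
  have hG := hGm.1
  have hmax : ∀ H ∈ {G : Finset (Fin n) | G ∈ Δ ∧ F ⊆ G}, G ⊆ H → G = H :=
    fun H hH h => le_antisymm h (hGm.2 hH h)
  exact ⟨G, ⟨hG.1, fun H hH hsub => (hmax H ⟨hH, hG.2.trans hsub⟩ hsub).symm⟩, hG.2⟩

lemma freeface_not_combeq (hΔ : IsSimplicialComplex Δ)
    (hff : ∃ F, IsFreeFace Δ F) :
    ¬ (∀ A B : Finset (Fin n), Disjoint A B → (∀ F ∉ Δ, A ∪ (B ∩ F) ∉ Δ) →
        (A ∉ Δ ∨ A ∪ B = univ)) := by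
  obtain ⟨F, hFΔ, i, hiF, hfacet, huniq⟩ := hff
  intro hC
  set B := (insert i F)ᶜ with hB
  have hdisj : Disjoint F B := disjoint_compl_right.mono_left (subset_insert i F)
  have hP : ∀ F' ∉ Δ, F ∪ (B ∩ F') ∉ Δ := by
    intro F' hF' hmem
    obtain ⟨G', hG'facet, hsub⟩ := exists_facet hΔ hmem
    have hFG' : F ⊆ G' := subset_union_left.trans hsub
    have hG'eq : G' = insert i F := huniq G' hG'facet hFG'
    have hBF' : B ∩ F' ⊆ insert i F := by
      rw [← hG'eq]; exact subset_union_right.trans hsub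
    have hempty : B ∩ F' ⊆ ∅ := by
      intro x hx
      have hx1 : x ∈ B := mem_of_mem_inter_left hx
      rw [hB, mem_compl] at hx1
      exact absurd (hBF' hx) hx1
    have hF'sub : F' ⊆ insert i F := by
      intro x hx
      by_contra hxn
      have : x ∈ B ∩ F' := mem_inter.2 ⟨by rw [hB, mem_compl]; exact hxn, hx⟩
      simpa using hempty this
    exact hF' (hΔ.2 _ hfacet.1 _ hF'sub)
  rcases hC F B hdisj hP with h | h
  · exact h hFΔ
  · have hi : i ∈ F ∪ B := h ▸ mem_univ i
    rcases mem_union.1 hi with h' | h'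
    · exact hiF h'
    · rw [hB, mem_compl] at h'
      exact h' (mem_insert_self i F)

lemma combeq_of_no_freeface (hΔ : IsSimplicialComplex Δ)
    (hnf : ¬ ∃ F, IsFreeFace Δ F) :
    ∀ A B : Finset (Fin n), Disjoint A B → (∀ F ∉ Δ, A ∪ (B ∩ F) ∉ Δ) →
      (A ∉ Δ ∨ A ∪ B = univ) := by
  intro A B hdisj hP
  by_contra hcon
  push_neg at hcon
  obtain ⟨hAΔ', hne⟩ := hcon
  have hA : A ∈ Δ := hAΔ'
  set L := Bᶜ with hLdef
  have hAL : A ⊆ L := by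
    intro x hx
    rw [hLdef, mem_compl]
    exact fun hxB => (Finset.disjoint_left.1 hdisj) hx hxB
  obtain ⟨j, hj⟩ : ∃ j, j ∉ A ∪ B := by
    by_contra h'
    push_neg at h'
    exact hne (eq_univ_iff_forall.2 h')
  have hjA : j ∉ A := fun h => hj (mem_union_left _ h)
  have hjB : j ∉ B := fun h => hj (mem_union_right _ h)
  have hjL : j ∈ L := by rw [hLdef, mem_compl]; exact hjB
  have H' : ∀ S, S ⊆ B → A ∪ S ∈ Δ → L ∪ S ∈ Δ := by
    intro S hSB hAS
    by_contra hLS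
    have hPS := hP _ hLS
    have hBLS : B ∩ (L ∪ S) = S := by
      ext x
      rw [mem_inter, mem_union, hLdef, mem_compl]
      constructor
      · rintro ⟨hxB, hx | hx⟩
        · exact absurd hxB hx
        · exact hx
      · intro hxS
        exact ⟨hSB hxS, Or.inr hxS⟩
    rw [hBLS] at hPS
    exact hPS hAS
  have hTfin : {S : Finset (Fin n) | S ⊆ B ∧ A ∪ S ∈ Δ}.Finite := Set.toFinite _
  have hTne : {S : Finset (Fin n) | S ⊆ B ∧ A ∪ S ∈ Δ}.Nonempty :=
    ⟨∅, empty_subset B, by simpa using hA⟩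
  obtain ⟨S', hS'm⟩ := hTfin.exists_maximal hTne
  have hS'T := hS'm.1
  have hmax : ∀ S ∈ {S : Finset (Fin n) | S ⊆ B ∧ A ∪ S ∈ Δ}, S' ⊆ S → S' = S :=
    fun S hS h => le_antisymm h (hS'm.2 hS h)
  have hL : L ∪ S' ∈ Δ := H' S' hS'T.1 hS'T.2
  have key : ∀ G ∈ Δ, L ∪ S' ⊆ G ∨ A ∪ S' ⊆ G → G ⊆ L ∪ S' := by
    intro G hG hsub
    have hAG : A ⊆ G := by
      rcases hsub with hsub | hsub
      · exact (hAL.trans subset_union_left).trans hsub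
      · exact subset_union_left.trans hsub
    have hS'G : S' ⊆ G := by
      rcases hsub with hsub | hsub
      · exact subset_union_right.trans hsub
      · exact subset_union_right.trans hsub
    have hGB : G ∩ B ∈ {S : Finset (Fin n) | S ⊆ B ∧ A ∪ S ∈ Δ} := by
      refine ⟨inter_subset_right, hΔ.2 G hG _ (union_subset hAG inter_subset_left)⟩
    have hGBeq : S' = G ∩ B := hmax _ hGB (subset_inter hS'G hS'T.1)
    intro x hx
    by_cases hxB : x ∈ B
    · exact mem_union_right _ (hGBeq ▸ mem_inter.2 ⟨hx, hxB⟩)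
    · exact mem_union_left _ (by rw [hLdef, mem_compl]; exact hxB)
  have hfacet : IsFacet Δ (L ∪ S') := by
    refine ⟨hL, fun H hH hsub => ?_⟩
    exact subset_antisymm (key H hH (Or.inl hsub)) hsub
  have hjLS : j ∈ L ∪ S' := mem_union_left _ hjL
  refine hnf ⟨(L ∪ S').erase j, hΔ.2 _ hL _ (erase_subset _ _), j, notMem_erase j _, ?_, ?_⟩
  · rw [Finset.insert_erase hjLS]
    exact hfacet
  · intro G hG hFG
    rw [Finset.insert_erase hjLS]
    have hASsub : A ∪ S' ⊆ (L ∪ S').erase j := by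
      intro x hx
      rw [Finset.mem_erase]
      refine ⟨?_, union_subset (hAL.trans subset_union_left) subset_union_right hx⟩
      rintro rfl
      rcases mem_union.1 hx with h' | h'
      · exact hjA h'
      · exact hjB (hS'T.1 h')
    have hGsub : G ⊆ L ∪ S' := key G hG.1 (Or.inr (hASsub.trans hFG))
    exact (hG.2 _ hL hGsub).symm


lemma PQ_iff_combeq {Δ : Set (Finset (Fin n))} (hΔ : IsSimplicialComplex Δ) :
    (∀ e : Fin n →₀ ℕ, (∀ F ∉ Δ, ∃ G ∉ Δ, d2F G ≤ e + dF F) →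
        ((∃ G ∉ Δ, d2F G ≤ e) ∨ dF Finset.univ ≤ e)) ↔
      (∀ A B : Finset (Fin n), Disjoint A B → (∀ F ∉ Δ, A ∪ (B ∩ F) ∉ Δ) →
        (A ∉ Δ ∨ A ∪ B = univ)) := by
  constructor
  · intro h A B hdisj hP
    set e : Fin n →₀ ℕ := d2F A + dF B with hedef
    have he : ∀ i, e i = if i ∈ A then 2 else if i ∈ B then 1 else 0 := by
      intro i
      rw [hedef, Finsupp.add_apply, d2F_apply, dF_apply]
      by_cases hiA : i ∈ A
      · have hiB : i ∉ B := Finset.disjoint_left.1 hdisj hiA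
        simp [hiA, hiB]
      · simp [hiA]
    have hPe : ∀ F ∉ Δ, ∃ G ∉ Δ, d2F G ≤ e + dF F := by
      intro F hF
      refine ⟨A ∪ (B ∩ F), hP F hF, ?_⟩
      rw [Finsupp.le_def]
      intro i
      rw [d2F_apply, Finsupp.add_apply, dF_apply, he i]
      by_cases hiA : i ∈ A <;> by_cases hiB : i ∈ B <;> by_cases hiF : i ∈ F <;>
        simp [hiA, hiB, hiF, mem_union, mem_inter]
    rcases h e hPe with ⟨G, hG, hle⟩ | hle
    · left
      intro hAin
      have hGA : G ⊆ A := by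
        intro x hxG
        have hx := Finsupp.le_def.1 hle x
        rw [d2F_apply, if_pos hxG, he x] at hx
        by_contra hxA
        rw [if_neg hxA] at hx
        split_ifs at hx <;> omega
      exact hG (hΔ.2 A hAin G hGA)
    · right
      apply eq_univ_iff_forall.2
      intro x
      have hx := Finsupp.le_def.1 hle x
      rw [dF_apply, if_pos (mem_univ x), he x] at hx
      rw [mem_union]
      by_contra hcon
      push_neg at hcon
      rw [if_neg hcon.1, if_neg hcon.2] at hx
      omega
  · intro h e hPe
    classical
    set A : Finset (Fin n) := univ.filter (fun i => 2 ≤ e i) with hAdef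
    set B : Finset (Fin n) := univ.filter (fun i => e i = 1) with hBdef
    have hmemA : ∀ i, i ∈ A ↔ 2 ≤ e i := by intro i; simp [hAdef]
    have hmemB : ∀ i, i ∈ B ↔ e i = 1 := by intro i; simp [hBdef]
    have hdisj : Disjoint A B := by
      rw [Finset.disjoint_left]
      intro i hiA hiB
      rw [hmemA] at hiA
      rw [hmemB] at hiB
      omega
    have hP : ∀ F ∉ Δ, A ∪ (B ∩ F) ∉ Δ := by
      intro F hF hmem
      obtain ⟨G, hG, hle⟩ := hPe F hF
      have hGsub : G ⊆ A ∪ (B ∩ F) := by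
        intro x hxG
        have hx := Finsupp.le_def.1 hle x
        rw [Finsupp.add_apply, d2F_apply, if_pos hxG, dF_apply] at hx
        rw [mem_union, mem_inter, hmemA, hmemB]
        by_cases hxF : x ∈ F
        · rw [if_pos hxF] at hx
          by_cases h2 : 2 ≤ e x
          · exact Or.inl h2
          · exact Or.inr ⟨by omega, hxF⟩
        · rw [if_neg hxF] at hx
          omega
      exact hG (hΔ.2 _ hmem G hGsub)
    rcases h A B hdisj hP with hA | hAB
    · left
      refine ⟨A, hA, ?_⟩
      rw [Finsupp.le_def]
      intro i
      rw [d2F_apply]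
      split_ifs with hiA
      · exact (hmemA i).1 hiA
      · exact Nat.zero_le _
    · right
      rw [Finsupp.le_def]
      intro i
      rw [dF_apply, if_pos (mem_univ i)]
      have : i ∈ A ∪ B := hAB ▸ mem_univ i
      rcases mem_union.1 this with h' | h'
      · have := (hmemA i).1 h'; omega
      · have := (hmemB i).1 h'; omega


end SRAux

/-- For Δ not a cone over any vertex, `I_Δ^[2] : I_Δ = I_Δ^[2] + (x_1 ⋯ x_n)`
iff Δ has no free face. -/
theorem stmt_0 (K : Type*) [Field K] {n : ℕ} (Δ : Set (Finset (Fin n)))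
    (hΔ : IsSimplicialComplex Δ)
    (hcone : ∀ i : Fin n, ¬ ∀ F ∈ Δ, insert i F ∈ Δ) :
    Submodule.colon (SRIdeal2 K Δ) (SRIdeal K Δ) =
      SRIdeal2 K Δ ⊔ Ideal.span {∏ i : Fin n, (X i : MvPowerSeries (Fin n) K)} ↔
    ¬ ∃ F, IsFreeFace Δ F := by
  rw [SRAux.ideal_eq_iff K Δ, SRAux.PQ_iff_combeq hΔ]
  constructor
  · intro hcomb hff
    exact SRAux.freeface_not_combeq hΔ hff hcomb
  · intro hnf
    exact SRAux.combeq_of_no_freeface hΔ hnf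
end

section
/- Let Δ be a simplicial complex on [n] and suppose F ∈ Δ is a free face whose unique containing facet is F ∪ {i} for some i ∉ F. Then the monomial m := (∏_{j∈F} x_j^2) · (∏_{j∈[n]∖(F∪{i})} x_j) satisfies m ∈ I_Δ^[2] : I_Δ but m ∉ I_Δ^[2] + (x_1 x_2 ⋯ x_n). In particular, if Δ has a free face then I_Δ^[2] : I_Δ ≠ I_Δ^[2] + (x_1 x_2 ⋯ x_n). -/
open MvPowerSeries Finset

noncomputable def expv {n : ℕ} (S : Finset (Fin n)) (k : ℕ) : (Fin n) →₀ ℕ :=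
  ∑ j ∈ S, Finsupp.single j k

lemma expv_apply {n : ℕ} (S : Finset (Fin n)) (k : ℕ) (a : Fin n) :
    expv S k a = if a ∈ S then k else 0 := by
  classical
  simp only [expv, Finsupp.finset_sum_apply, Finsupp.single_apply]
  rw [Finset.sum_ite_eq' S a (fun _ => k)]

lemma prod_X_pow (K : Type*) [Field K] {n : ℕ} (S : Finset (Fin n)) (k : ℕ) :
    ∏ j ∈ S, (X j : MvPowerSeries (Fin n) K) ^ k = monomial (expv S k) 1 := by
  classical
  induction S using Finset.induction with
  | empty => simp [expv]
  | @insert a s hx ih =>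
    have : expv (insert a s) k = Finsupp.single a k + expv s k := Finset.sum_insert hx
    rw [Finset.prod_insert hx, ih, X_pow_eq, monomial_mul_monomial, one_mul, this]

lemma prod_X_one (K : Type*) [Field K] {n : ℕ} (S : Finset (Fin n)) :
    ∏ j ∈ S, (X j : MvPowerSeries (Fin n) K) = monomial (expv S 1) 1 := by
  simpa using prod_X_pow K S 1

lemma coeff_span_monomials_eq_zero (K : Type*) [Field K] {n : ℕ}
    (E : Set ((Fin n) →₀ ℕ)) (d : (Fin n) →₀ ℕ)
    (hE : ∀ e ∈ E, ¬ e ≤ d)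
    (f : MvPowerSeries (Fin n) K)
    (hf : f ∈ Ideal.span ((fun e => monomial e (1 : K)) '' E)) :
    ∀ e ≤ d, coeff e f = 0 := by
  refine Submodule.span_induction ?_ ?_ ?_ ?_ hf
  · rintro _ ⟨e0, he0, rfl⟩ e hed
    rw [coeff_monomial]
    split_ifs with h
    · exact absurd (h ▸ hed) (hE e0 he0)
    · rfl
  · intro e _; simp
  · intro f g _ _ hf hg e hed
    simp [map_add, hf e hed, hg e hed]
  · intro s g _ hg e hed
    rw [smul_eq_mul, coeff_mul]
    refine Finset.sum_eq_zero fun p hp => ?_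
    rw [Finset.HasAntidiagonal.mem_antidiagonal] at hp
    rw [hg p.2 (le_trans (hp ▸ le_add_self) hed), mul_zero]


/-- If `F` is a free face with unique containing facet `F ∪ {i}`, then
`m = (∏_{j∈F} x_j^2)·(∏_{j∉F∪{i}} x_j)` lies in `I_Δ^[2] : I_Δ` but not in
`I_Δ^[2] + (x_1 ⋯ x_n)`; in particular the two ideals differ. -/
theorem stmt_1 (K : Type*) [Field K] {n : ℕ} (Δ : Set (Finset (Fin n)))
    (hΔ : IsSimplicialComplex Δ) (F : Finset (Fin n)) (hF : F ∈ Δ)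
    (i : Fin n) (hi : i ∉ F) (hfacet : IsFacet Δ (insert i F))
    (huniq : ∀ G, IsFacet Δ G → F ⊆ G → G = insert i F) :
    ((∏ j ∈ F, (X j : MvPowerSeries (Fin n) K) ^ 2) *
        ∏ j ∈ Finset.univ \ insert i F, (X j : MvPowerSeries (Fin n) K)) ∈
      Submodule.colon (SRIdeal2 K Δ) (SRIdeal K Δ) ∧
    ((∏ j ∈ F, (X j : MvPowerSeries (Fin n) K) ^ 2) *
        ∏ j ∈ Finset.univ \ insert i F, (X j : MvPowerSeries (Fin n) K)) ∉
      SRIdeal2 K Δ ⊔ Ideal.span {∏ j : Fin n, (X j : MvPowerSeries (Fin n) K)} ∧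
    Submodule.colon (SRIdeal2 K Δ) (SRIdeal K Δ) ≠
      SRIdeal2 K Δ ⊔ Ideal.span {∏ j : Fin n, (X j : MvPowerSeries (Fin n) K)} := by
  classical
  obtain ⟨hempty, hsub⟩ := hΔ
  set S := MvPowerSeries (Fin n) K
  set d : (Fin n) →₀ ℕ := expv F 2 + expv (Finset.univ \ insert i F) 1 with hd
  have hda : ∀ a, d a = if a ∈ F then 2 else if a = i then 0 else 1 := by
    intro a
    rw [hd, Finsupp.add_apply, expv_apply, expv_apply]
    by_cases h1 : a ∈ F <;> by_cases h2 : a = i <;>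
      simp_all [Finset.mem_sdiff, Finset.mem_insert]
  have hm : (∏ j ∈ F, (X j : MvPowerSeries (Fin n) K) ^ 2) *
      ∏ j ∈ Finset.univ \ insert i F, (X j : MvPowerSeries (Fin n) K) =
      monomial d 1 := by
    rw [prod_X_pow, prod_X_one, monomial_mul_monomial, one_mul]
  -- every face is contained in a facet
  have exists_facet : ∀ H ∈ Δ, ∃ G, IsFacet Δ G ∧ H ⊆ G := by
    intro H hH
    obtain ⟨G, hG, hmax⟩ := Finset.exists_max_image
      (Finset.univ.filter (fun G => G ∈ Δ ∧ H ⊆ G)) Finset.card ⟨H, by simp [hH]⟩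
    simp only [Finset.mem_filter, Finset.mem_univ, true_and] at hG hmax
    refine ⟨G, ⟨hG.1, fun H' hH' hGH' => ?_⟩, hG.2⟩
    exact (Finset.eq_of_subset_of_card_le hGH'
      (hmax H' (by exact ⟨hH', hG.2.trans hGH'⟩))).symm
  -- key combinatorial fact
  have key : ∀ G : Finset (Fin n), G ∉ Δ → (F ∪ G) \ {i} ∉ Δ := by
    intro G hG hmem
    obtain ⟨G', hG', hsub'⟩ := exists_facet _ hmem
    have hFG' : F ⊆ G' := by
      intro a ha
      refine hsub' ?_
      simp only [Finset.mem_sdiff, Finset.mem_union, Finset.mem_singleton]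
      exact ⟨Or.inl ha, fun h => hi (h ▸ ha)⟩
    have hGeq : G' = insert i F := huniq G' hG' hFG'
    have hGsub : G ⊆ insert i F := by
      intro a ha
      by_cases hai : a = i
      · simp [hai]
      · have : a ∈ (F ∪ G) \ {i} := by
          simp [Finset.mem_sdiff, Finset.mem_union, ha, hai]
        exact hGeq ▸ hsub' this
    exact hG (hsub _ hfacet.1 G hGsub)
  have colon_mem : (monomial d (1 : K)) ∈
      Submodule.colon (SRIdeal2 K Δ) (SRIdeal K Δ) := by
    rw [Submodule.mem_colon]
    have hle : SRIdeal K Δ ≤ Submodule.comap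
        (LinearMap.mulLeft (MvPowerSeries (Fin n) K) (monomial d 1)) (SRIdeal2 K Δ) := by
      rw [SRIdeal, Ideal.span_le]
      rintro _ ⟨G, hG, rfl⟩
      simp only [SetLike.mem_coe, Submodule.mem_comap, LinearMap.mulLeft_apply]
      set H : Finset (Fin n) := (F ∪ G) \ {i} with hH
      set C : Finset (Fin n) := ((insert i F) ∩ G) ∪
        (Finset.univ \ (insert i F ∪ G)) with hC
      have hexp : d + expv G 1 = expv H 2 + expv C 1 := by
        ext a
        simp only [Finsupp.add_apply, expv_apply, hda a, hH, hC,
          Finset.mem_sdiff, Finset.mem_union, Finset.mem_singleton,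
          Finset.mem_inter, Finset.mem_insert, Finset.mem_univ, true_and]
        by_cases h1 : a ∈ F <;> by_cases h2 : a ∈ G <;> by_cases h3 : a = i <;>
          simp_all
      have : (monomial d (1 : K)) * ∏ j ∈ G, (X j : MvPowerSeries (Fin n) K) =
          (∏ j ∈ C, (X j : MvPowerSeries (Fin n) K)) *
          ∏ j ∈ H, (X j : MvPowerSeries (Fin n) K) ^ 2 := by
        rw [prod_X_one, prod_X_one, prod_X_pow, monomial_mul_monomial,
          monomial_mul_monomial, one_mul, hexp, add_comm]
      rw [this]
      exact Ideal.mul_mem_left _ _ (Ideal.subset_span ⟨H, key G (by exact hG), rfl⟩)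
    intro p hp
    rw [smul_eq_mul]
    exact hle hp
  have not_mem : (monomial d (1 : K)) ∉
      SRIdeal2 K Δ ⊔ Ideal.span {∏ j : Fin n, (X j : MvPowerSeries (Fin n) K)} := by
    intro hmem
    set E : Set ((Fin n) →₀ ℕ) :=
      ((fun H : Finset (Fin n) => expv H 2) '' {H | H ∉ Δ}) ∪ {expv Finset.univ 1} with hE
    have hsubset : (SRIdeal2 K Δ ⊔
        Ideal.span {∏ j : Fin n, (X j : MvPowerSeries (Fin n) K)}) ≤
        Ideal.span ((fun e => monomial e (1 : K)) '' E) := by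
      apply sup_le
      · rw [SRIdeal2, Ideal.span_le]
        rintro _ ⟨G, hG, rfl⟩
        exact Ideal.subset_span ⟨expv G 2, Or.inl ⟨G, hG, rfl⟩, (prod_X_pow K G 2).symm⟩
      · rw [Ideal.span_le, Set.singleton_subset_iff]
        exact Ideal.subset_span ⟨expv Finset.univ 1, Or.inr rfl, (prod_X_one K _).symm⟩
    have hEd : ∀ e ∈ E, ¬ e ≤ d := by
      rintro e (⟨H, hH, rfl⟩ | rfl)
      · intro hle
        apply hH
        apply hsub F hF
        intro a ha
        have h2 : (2 : ℕ) ≤ d a := by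
          have := hle a
          rwa [expv_apply, if_pos ha] at this
        rw [hda a] at h2
        by_contra haF
        rw [if_neg haF] at h2
        split at h2 <;> omega
      · intro hle
        have := hle i
        rw [expv_apply, if_pos (Finset.mem_univ i), hda i, if_neg hi, if_pos rfl] at this
        omega
    have := coeff_span_monomials_eq_zero K E d hEd _ (hsubset hmem) d le_rfl
    rw [coeff_monomial_same] at this
    exact one_ne_zero this
  rw [hm]
  refine ⟨colon_mem, not_mem, fun heq => not_mem (heq ▸ colon_mem)⟩
end

section
/- Let Δ be a simplicial complex on [n] that is not a cone over any vertex, and assume Δ has no free face. Then I_Δ^[2] : I_Δ ⊆ I_Δ^[2] + (x_1 x_2 ⋯ x_n). -/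
open MvPowerSeries Finset

/- ### Auxiliary lemmas -/

lemma aux_sum_single_apply {n : ℕ} (F : Finset (Fin n)) (k : ℕ) (j : Fin n) :
    (∑ i ∈ F, Finsupp.single i k) j = if j ∈ F then k else 0 := by
  classical
  have h1 : (∑ i ∈ F, Finsupp.single i k) j = ∑ i ∈ F, (Finsupp.single i k) j := by
    rw [Finsupp.coe_finset_sum, Finset.sum_apply]
  rw [h1]
  simp only [Finsupp.single_apply]
  rw [Finset.sum_ite_eq']

lemma aux_prod_monomial {K : Type*} [Field K] {n : ℕ} (F : Finset (Fin n))
    (d : Fin n → (Fin n →₀ ℕ)) :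
    (∏ i ∈ F, monomial (d i) (1 : K)) = monomial (∑ i ∈ F, d i) 1 := by
  classical
  induction F using Finset.induction with
  | empty => simp
  | @insert x s hx ih =>
    rw [Finset.prod_insert hx, Finset.sum_insert hx, ih, monomial_mul_monomial, one_mul]

lemma aux_prod_X_sq {K : Type*} [Field K] {n : ℕ} (F : Finset (Fin n)) :
    (∏ i ∈ F, (X i : MvPowerSeries (Fin n) K) ^ 2) =
      monomial (∑ i ∈ F, Finsupp.single i 2) 1 := by
  rw [← aux_prod_monomial]
  exact Finset.prod_congr rfl fun i _ => X_pow_eq i 2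

lemma aux_prod_X {K : Type*} [Field K] {n : ℕ} (F : Finset (Fin n)) :
    (∏ i ∈ F, (X i : MvPowerSeries (Fin n) K)) =
      monomial (∑ i ∈ F, Finsupp.single i 1) 1 := by
  rw [← aux_prod_monomial]
  exact Finset.prod_congr rfl fun i _ => rfl

/-- If `f` lies in the ideal generated by the monomials with exponents in `E`, then every
exponent in the support of `f` dominates some element of `E`. -/
lemma aux_support_of_mem_span {K : Type*} [Field K] {n : ℕ} (E : Set (Fin n →₀ ℕ))
    {f : MvPowerSeries (Fin n) K}
    (hf : f ∈ Ideal.span ((fun e => monomial e (1 : K)) '' E)) :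
    ∀ a, coeff a f ≠ 0 → ∃ e ∈ E, e ≤ a := by
  classical
  refine Submodule.span_induction ?_ ?_ ?_ ?_ hf
  · rintro x ⟨e, he, rfl⟩ a ha
    have := eq_of_coeff_monomial_ne_zero ha
    exact ⟨e, he, le_of_eq this.symm⟩
  · intro a ha
    simp at ha
  · intro x y _ _ hx hy a ha
    have : coeff a x ≠ 0 ∨ coeff a y ≠ 0 := by
      by_contra h
      push_neg at h
      rw [map_add, h.1, h.2, add_zero] at ha
      exact ha rfl
    rcases this with h | h
    · exact hx a h
    · exact hy a h
  · intro r x _ hx a ha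
    rw [smul_eq_mul, coeff_mul] at ha
    obtain ⟨p, hp, hpne⟩ := Finset.exists_ne_zero_of_sum_ne_zero ha
    obtain ⟨e, he, hle⟩ := hx p.2 (right_ne_zero_of_mul hpne)
    rw [Finset.HasAntidiagonal.mem_antidiagonal] at hp
    exact ⟨e, he, le_trans hle (hp ▸ le_add_self)⟩

/-- Conversely: if every exponent in the support of `f` dominates an element of the finite
set `E`, then `f` lies in the ideal generated by the monomials with exponents in `E`. -/
lemma aux_mem_span_of_support {K : Type*} [Field K] {n : ℕ} (E : Finset (Fin n →₀ ℕ))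
    {f : MvPowerSeries (Fin n) K}
    (h : ∀ a, coeff a f ≠ 0 → ∃ e ∈ E, e ≤ a) :
    f ∈ Ideal.span ((fun e => monomial e (1 : K)) '' (E : Set (Fin n →₀ ℕ))) := by
  classical
  set pick : (Fin n →₀ ℕ) → Option (Fin n →₀ ℕ) :=
    fun a => if h : ∃ e ∈ E, e ≤ a then some h.choose else none with hpick
  have pick_spec : ∀ a e, pick a = some e → e ∈ E ∧ e ≤ a := by
    intro a e hae
    by_cases h' : ∃ e ∈ E, e ≤ a
    · simp only [hpick, dif_pos h'] at hae
      obtain ⟨h1, h2⟩ := h'.choose_spec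
      cases Option.some.inj hae
      exact ⟨h1, h2⟩
    · simp only [hpick, dif_neg h'] at hae
      exact absurd hae (by simp)
  set g : (Fin n →₀ ℕ) → MvPowerSeries (Fin n) K :=
    fun e b => if pick (b + e) = some e then coeff (b + e) f else 0 with hg
  have key : f = ∑ e ∈ E, monomial e 1 * g e := by
    ext a
    rw [map_sum]
    have hterm : ∀ e ∈ E, coeff a (monomial e 1 * g e) =
        if e ≤ a ∧ pick a = some e then coeff a f else 0 := by
      intro e _
      rw [coeff_monomial_mul]
      by_cases hle : e ≤ a
      · rw [if_pos hle, one_mul]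
        have hcoeff : coeff (a - e) (g e) = g e (a - e) := rfl
        rw [hcoeff, hg]
        simp only
        rw [tsub_add_cancel_of_le hle]
        by_cases hp : pick a = some e
        · rw [if_pos hp, if_pos ⟨hle, hp⟩]
        · rw [if_neg hp, if_neg (by tauto)]
      · rw [if_neg hle, if_neg (by tauto)]
    rw [Finset.sum_congr rfl hterm]
    by_cases hcf : coeff a f = 0
    · rw [hcf]
      refine (Finset.sum_eq_zero fun e _ => ?_).symm
      split <;> rfl
    · obtain ⟨e₀, he₀E, he₀⟩ := h a hcf
      have hex : ∃ e ∈ E, e ≤ a := ⟨e₀, he₀E, he₀⟩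
      have hpa : pick a = some hex.choose := by simp only [hpick]; exact dif_pos hex
      obtain ⟨hc1, hc2⟩ := hex.choose_spec
      rw [Finset.sum_eq_single hex.choose]
      · rw [if_pos ⟨hc2, hpa⟩]
      · intro e heE hne
        rw [if_neg]
        rintro ⟨-, hp⟩
        exact hne (Option.some.inj (hp.symm.trans hpa))
      · intro habs
        exact absurd hc1 habs
  rw [key]
  refine Ideal.sum_mem _ fun e he => ?_
  exact Ideal.mul_mem_right _ _ (Ideal.subset_span ⟨e, he, rfl⟩)

/-- The combinatorial heart: if `Δ` has no free face, `A ∈ Δ`, and `i ∉ A ∪ B`, then there is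
a non-face `G` with `A ∪ (B ∩ G) ∈ Δ`. -/
lemma aux_exists_nonface {n : ℕ} (Δ : Set (Finset (Fin n)))
    (hΔ : IsSimplicialComplex Δ) (hfree : ¬ ∃ F, IsFreeFace Δ F)
    (A B : Finset (Fin n)) (hA : A ∈ Δ) (i : Fin n) (hiA : i ∉ A) (hiB : i ∉ B) :
    ∃ G, G ∉ Δ ∧ A ∪ (B ∩ G) ∈ Δ := by
  classical
  by_contra hcon
  push_neg at hcon
  -- every facet containing A contains i
  have key : ∀ G : Finset (Fin n), IsFacet Δ G → A ⊆ G → i ∈ G := by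
    intro G hG hAG
    by_contra hiG
    have hins : insert i G ∉ Δ := by
      intro hmem
      exact hiG ((hG.2 _ hmem (Finset.subset_insert _ _)) ▸ Finset.mem_insert_self i G)
    have h1 := hcon (insert i G) hins
    have h2 : B ∩ insert i G = B ∩ G := by
      ext x
      simp only [Finset.mem_inter, Finset.mem_insert]
      constructor
      · rintro ⟨hxB, hx | hxG⟩
        · exact absurd (hx ▸ hxB) hiB
        · exact ⟨hxB, hxG⟩
      · rintro ⟨hxB, hxG⟩; exact ⟨hxB, Or.inr hxG⟩
    rw [h2] at h1
    exact h1 (hΔ.2 G hG.1 _ (Finset.union_subset hAG (Finset.inter_subset_right.trans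
      (le_refl G))))
  -- find a facet containing A
  obtain ⟨H, hHT, hHmax⟩ := Finset.exists_max_image
    (Finset.univ.filter (fun H : Finset (Fin n) => H ∈ Δ ∧ A ⊆ H)) Finset.card
    ⟨A, by simp [hA]⟩
  simp only [Finset.mem_filter, Finset.mem_univ, true_and] at hHT
  have hfacet : IsFacet Δ H := by
    refine ⟨hHT.1, fun H' hH' hsub => ?_⟩
    have : H' ∈ Finset.univ.filter (fun H : Finset (Fin n) => H ∈ Δ ∧ A ⊆ H) := by
      simp [hH', hHT.2.trans hsub]
    exact (Finset.eq_of_subset_of_card_le hsub (hHmax _ this)).symm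
  have hiH : i ∈ H := key H hfacet hHT.2
  -- H.erase i is a free face
  refine hfree ⟨H.erase i, hΔ.2 H hHT.1 _ (Finset.erase_subset _ _),
    i, Finset.notMem_erase i H, ?_, ?_⟩
  · rw [Finset.insert_erase hiH]; exact hfacet
  · intro G hG hsubG
    rw [Finset.insert_erase hiH]
    have hAG : A ⊆ G := (Finset.subset_erase.mpr ⟨hHT.2, hiA⟩).trans hsubG
    have hiG : i ∈ G := key G hG hAG
    have : H ⊆ G := by
      intro x hx
      by_cases hxi : x = i
      · exact hxi ▸ hiG
      · exact hsubG (Finset.mem_erase.mpr ⟨hxi, hx⟩)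
    exact hG.2 _ hfacet.1 (hfacet.2 G hG.1 this ▸ Finset.Subset.refl _) ▸
      (hfacet.2 G hG.1 this)

/-- If Δ is not a cone over any vertex and has no free face, then
`I_Δ^[2] : I_Δ ⊆ I_Δ^[2] + (x_1 ⋯ x_n)`. -/
theorem stmt_2 (K : Type*) [Field K] {n : ℕ} (Δ : Set (Finset (Fin n)))
    (hΔ : IsSimplicialComplex Δ)
    (hcone : ∀ i : Fin n, ¬ ∀ F ∈ Δ, insert i F ∈ Δ)
    (hfree : ¬ ∃ F, IsFreeFace Δ F) :
    Submodule.colon (SRIdeal2 K Δ) (SRIdeal K Δ) ≤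
      SRIdeal2 K Δ ⊔ Ideal.span {∏ i : Fin n, (X i : MvPowerSeries (Fin n) K)} := by
  classical
  intro f hf
  -- exponent vectors
  set e2 : Finset (Fin n) → (Fin n →₀ ℕ) := fun F => ∑ i ∈ F, Finsupp.single i 2 with he2
  set e1 : Finset (Fin n) → (Fin n →₀ ℕ) := fun F => ∑ i ∈ F, Finsupp.single i 1 with he1
  -- rewrite SRIdeal2 as a span of monomials
  have hSR2 : SRIdeal2 K Δ =
      Ideal.span ((fun e => monomial e (1 : K)) '' (e2 '' {F | F ∉ Δ})) := by
    rw [SRIdeal2, Set.image_image]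
    congr 1
    exact Set.image_congr fun F _ => aux_prod_X_sq F
  -- the finite set of target exponents
  set E : Finset (Fin n →₀ ℕ) :=
    (Finset.univ.filter (fun F : Finset (Fin n) => F ∉ Δ)).image e2 ∪ {e1 Finset.univ}
    with hE
  -- the span of the E-monomials is contained in the right-hand side
  have hEle : Ideal.span ((fun e => monomial e (1 : K)) '' (E : Set (Fin n →₀ ℕ))) ≤
      SRIdeal2 K Δ ⊔ Ideal.span {∏ i : Fin n, (X i : MvPowerSeries (Fin n) K)} := by
    rw [Ideal.span_le]
    rintro _ ⟨e, he, rfl⟩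
    rw [hE] at he
    simp only [Finset.coe_union, Set.mem_union, Finset.coe_image, Set.mem_image,
      Finset.mem_coe, Finset.mem_filter, Finset.mem_univ, true_and, Finset.coe_singleton,
      Set.mem_singleton_iff] at he
    rcases he with ⟨F, hF, rfl⟩ | rfl
    · refine Ideal.mem_sup_left (Ideal.subset_span ⟨F, hF, ?_⟩)
      show _ = monomial (e2 F) 1
      rw [he2]
      exact aux_prod_X_sq F
    · refine Ideal.mem_sup_right ?_
      show monomial (e1 Finset.univ) 1 ∈ _
      rw [he1, ← aux_prod_X]
      exact Ideal.subset_span rfl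
  refine hEle (aux_mem_span_of_support E ?_)
  -- main claim about the support of f
  intro a ha
  by_contra hcon
  push_neg at hcon
  have hcon2 : ∀ F : Finset (Fin n), F ∉ Δ → ¬ e2 F ≤ a := by
    intro F hF
    have hmem : e2 F ∈ E := by
      rw [hE]
      refine Finset.mem_union_left _ (Finset.mem_image_of_mem _ ?_)
      simp [hF]
    exact hcon _ hmem
  have hcon1 : ¬ e1 Finset.univ ≤ a := by
    have hmem : e1 Finset.univ ∈ E := by
      rw [hE]
      exact Finset.mem_union_right _ (Finset.mem_singleton_self _)
    exact hcon _ hmem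
  -- the sets A and B
  set A : Finset (Fin n) := Finset.univ.filter (fun j => 2 ≤ a j) with hAdef
  set B : Finset (Fin n) := Finset.univ.filter (fun j => a j = 1) with hBdef
  have hA : A ∈ Δ := by
    by_contra hAn
    refine hcon2 A hAn ?_
    intro j
    rw [he2]
    simp only
    rw [aux_sum_single_apply]
    split
    · rename_i hj
      rw [hAdef] at hj
      simp only [Finset.mem_filter] at hj
      exact hj.2
    · exact Nat.zero_le _
  obtain ⟨i, hi0⟩ : ∃ i, a i = 0 := by
    by_contra h
    push_neg at h
    refine hcon1 fun j => ?_
    rw [he1]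
    simp only
    rw [aux_sum_single_apply]
    simp only [Finset.mem_univ, if_true]
    exact Nat.one_le_iff_ne_zero.mpr (h j)
  have hiA : i ∉ A := by simp [hAdef, hi0]
  have hiB : i ∉ B := by simp [hBdef, hi0]
  obtain ⟨G, hGn, hGface⟩ := aux_exists_nonface Δ hΔ hfree A B hA i hiA hiB
  -- multiply f by x_G
  have hxG : (∏ i ∈ G, (X i : MvPowerSeries (Fin n) K)) ∈ SRIdeal K Δ :=
    Ideal.subset_span ⟨G, hGn, rfl⟩
  have hmul : f * (∏ i ∈ G, (X i : MvPowerSeries (Fin n) K)) ∈ SRIdeal2 K Δ := by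
    have := Submodule.mem_colon.mp hf _ hxG
    rwa [smul_eq_mul] at this
  have hcoeff : coeff (a + e1 G) (f * (∏ i ∈ G, (X i : MvPowerSeries (Fin n) K))) ≠ 0 := by
    rw [aux_prod_X]
    have he1G : e1 G = ∑ i ∈ G, Finsupp.single i 1 := by rw [he1]
    rw [he1G, coeff_add_mul_monomial, mul_one]
    exact ha
  rw [hSR2] at hmul
  obtain ⟨e, he, hle⟩ := aux_support_of_mem_span _ hmul _ hcoeff
  obtain ⟨F, hFn, rfl⟩ := he
  -- derive that F ⊆ A ∪ (B ∩ G), hence F ∈ Δ: contradiction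
  refine hFn (hΔ.2 _ hGface F ?_)
  intro j hj
  have h2 : 2 ≤ a j + (if j ∈ G then 1 else 0) := by
    have := hle j
    rw [he2] at this
    simp only at this
    rw [aux_sum_single_apply, if_pos hj] at this
    rw [Finsupp.add_apply] at this
    rw [he1] at this
    simp only at this
    rw [aux_sum_single_apply] at this
    exact this
  simp only [Finset.mem_union, Finset.mem_inter, hAdef, hBdef, Finset.mem_filter,
    Finset.mem_univ, true_and]
  by_cases hja : 2 ≤ a j
  · exact Or.inl hja
  · right
    by_cases hjG : j ∈ G
    · rw [if_pos hjG] at h2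
      refine ⟨by omega, hjG⟩
    · rw [if_neg hjG] at h2
      omega
end

section
/- For every simplicial complex Δ on [n], the inclusion I_Δ^[2] + (x_1 x_2 ⋯ x_n) ⊆ I_Δ^[2] : I_Δ holds. -/
open MvPowerSeries Finset

/-- For every simplicial complex Δ,
`I_Δ^[2] + (x_1 ⋯ x_n) ⊆ I_Δ^[2] : I_Δ`. -/
theorem stmt_3 (K : Type*) [Field K] {n : ℕ} (Δ : Set (Finset (Fin n)))
    (hΔ : IsSimplicialComplex Δ) :
    SRIdeal2 K Δ ⊔ Ideal.span {∏ i : Fin n, (X i : MvPowerSeries (Fin n) K)} ≤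
      Submodule.colon (SRIdeal2 K Δ) (SRIdeal K Δ) := by
  rw [sup_le_iff]
  constructor
  · intro x hx
    rw [Submodule.mem_colon]
    intro p hp
    rw [smul_eq_mul]
    exact Ideal.mul_mem_right _ _ hx
  · rw [Ideal.span_le]
    intro y hy
    simp only [Set.mem_singleton_iff] at hy
    subst hy
    rw [SetLike.mem_coe, Submodule.mem_colon]
    intro p hp
    rw [smul_eq_mul]
    refine Submodule.span_induction ?_ ?_ ?_ ?_ (SetLike.mem_coe.mp hp)
    · rintro q ⟨F, hF, rfl⟩
      have key : (∏ i : Fin n, (X i : MvPowerSeries (Fin n) K)) *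
          ∏ i ∈ F, (X i : MvPowerSeries (Fin n) K) =
          (∏ i ∈ F, (X i : MvPowerSeries (Fin n) K) ^ 2) *
          ∏ i ∈ Fᶜ, (X i : MvPowerSeries (Fin n) K) := by
        rw [← Finset.prod_mul_prod_compl F (fun i => (X i : MvPowerSeries (Fin n) K))]
        simp only [sq]
        rw [Finset.prod_mul_distrib]
        ring
      rw [key]
      exact Ideal.mul_mem_right _ _ (Ideal.subset_span ⟨F, hF, rfl⟩)
    · simp
    · intro a b _ _ ha hb
      rw [mul_add]
      exact Ideal.add_mem _ ha hb
    · intro c a _ ha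
      rw [smul_eq_mul, mul_comm c a, ← mul_assoc]
      exact Ideal.mul_mem_right _ _ ha
end

section
/- Let Δ be a simplicial complex on [n] and let m = ∏_{i=1}^n x_i^{a_i} be a monomial in S with supp(m) ≠ [n]. Then m ∈ I_Δ^[2] + (x_1 x_2 ⋯ x_n) if and only if supp₂(m) is not a face of Δ. -/
open MvPowerSeries Finset

lemma prod_X_pow_eq_monomial (K : Type*) [Field K] {n : ℕ} (s : Finset (Fin n))
    (e : Fin n → ℕ) :
    ∏ i ∈ s, (X i : MvPowerSeries (Fin n) K) ^ e i =
      monomial (∑ i ∈ s, Finsupp.single i (e i)) 1 := by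
  induction s using Finset.induction with
  | empty => simp [monomial_zero_one]
  | insert _ _ h ih =>
      rw [Finset.prod_insert h, Finset.sum_insert h, ih, X_pow_eq,
        monomial_mul_monomial, one_mul]

lemma coeff_span_monomials {σ K : Type*} [Field K] (S : Set (MvPowerSeries σ K))
    (d : σ →₀ ℕ) (h : ∀ f ∈ S, ∃ e : σ →₀ ℕ, f = monomial e 1 ∧ ¬ e ≤ d)
    {x : MvPowerSeries σ K} (hx : x ∈ Ideal.span S) : coeff d x = 0 := by
  have H : ∀ y ∈ Ideal.span S, ∀ g : MvPowerSeries σ K, coeff d (g * y) = 0 := by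
    intro y hy
    refine Submodule.span_induction ?_ ?_ ?_ ?_ hy
    · intro f hf g
      obtain ⟨e, rfl, he⟩ := h f hf
      rw [coeff_mul_monomial, if_neg he]
    · intro g; simp
    · intro p q hp hq hp' hq' g
      rw [mul_add, map_add, hp' g, hq' g, add_zero]
    · intro r p hp hp' g
      rw [smul_eq_mul, ← mul_assoc]
      exact hp' (g * r)
  have := H x hx 1
  rwa [one_mul] at this

/-- If `supp(m) ≠ [n]`, then `m ∈ I_Δ^[2] + (x_1 ⋯ x_n)` iff
`supp₂(m)` is not a face of Δ. -/
theorem stmt_5 (K : Type*) [Field K] {n : ℕ} (Δ : Set (Finset (Fin n)))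
    (hΔ : IsSimplicialComplex Δ) (a : Fin n → ℕ)
    (hsupp : (Finset.univ.filter fun i => 1 ≤ a i) ≠ Finset.univ) :
    (∏ i : Fin n, (X i : MvPowerSeries (Fin n) K) ^ a i) ∈
        SRIdeal2 K Δ ⊔ Ideal.span {∏ i : Fin n, (X i : MvPowerSeries (Fin n) K)} ↔
      (Finset.univ.filter fun i => 2 ≤ a i) ∉ Δ := by
  classical
  set S2 : Finset (Fin n) := Finset.univ.filter fun i => 2 ≤ a i with hS2
  constructor
  · intro hm hS2Δ
    rw [SRIdeal2, ← Ideal.span_union] at hm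
    have key : coeff (∑ i : Fin n, Finsupp.single i (a i))
        (∏ i : Fin n, (X i : MvPowerSeries (Fin n) K) ^ a i) = 0 := by
      apply coeff_span_monomials _ _ _ hm
      intro f hf
      rcases hf with ⟨F, hF, rfl⟩ | hf
      · refine ⟨∑ i ∈ F, Finsupp.single i 2, prod_X_pow_eq_monomial K F (fun _ => 2), ?_⟩
        intro hle
        apply hF
        have hFS2 : F ⊆ S2 := by
          intro i hi
          have := hle i
          simp only [Finsupp.finset_sum_apply, Finsupp.single_apply] at this
          rw [Finset.sum_ite_eq' F i (fun _ => 2), if_pos hi] at this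
          have h2 : (2 : ℕ) ≤ a i := by
            refine le_trans this ?_
            simp [Finsupp.finset_sum_apply, Finsupp.single_apply]
          simp [hS2, h2]
        exact hΔ.2 _ hS2Δ F hFS2
      · rw [Set.mem_singleton_iff] at hf
        subst hf
        refine ⟨∑ i : Fin n, Finsupp.single i 1, ?_, ?_⟩
        · have := prod_X_pow_eq_monomial K (Finset.univ : Finset (Fin n)) (fun _ => 1)
          simpa using this
        · intro hle
          apply hsupp
          rw [Finset.eq_univ_iff_forall]
          intro i
          have := hle i
          simp only [Finsupp.finset_sum_apply, Finsupp.single_apply] at this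
          rw [Finset.sum_ite_eq' Finset.univ i (fun _ => 1), if_pos (Finset.mem_univ i)] at this
          have h1 : (1 : ℕ) ≤ a i := by
            refine le_trans this ?_
            simp [Finsupp.finset_sum_apply, Finsupp.single_apply]
          simp [h1]
    rw [prod_X_pow_eq_monomial, coeff_monomial_same] at key
    exact one_ne_zero key
  · intro hS2Δ
    apply Ideal.mem_sup_left
    have hb : ∀ i : Fin n, (if i ∈ S2 then 2 else 0) + (a i - if i ∈ S2 then 2 else 0) = a i := by
      intro i
      split_ifs with h
      · have : 2 ≤ a i := by simpa [hS2] using h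
        omega
      · omega
    have heq : (∏ i : Fin n, (X i : MvPowerSeries (Fin n) K) ^ a i) =
        (∏ i ∈ S2, (X i : MvPowerSeries (Fin n) K) ^ 2) *
          ∏ i : Fin n, (X i : MvPowerSeries (Fin n) K) ^ (a i - if i ∈ S2 then 2 else 0) := by
      have h1 : (∏ i ∈ S2, (X i : MvPowerSeries (Fin n) K) ^ 2) =
          ∏ i : Fin n, (X i : MvPowerSeries (Fin n) K) ^ (if i ∈ S2 then 2 else 0) := by
        rw [← Finset.prod_filter_mul_prod_filter_not Finset.univ (fun i => i ∈ S2)]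
        have h2 : ∏ i ∈ Finset.univ.filter (fun i => ¬ i ∈ S2),
            (X i : MvPowerSeries (Fin n) K) ^ (if i ∈ S2 then 2 else 0) = 1 := by
          apply Finset.prod_eq_one
          intro i hi
          rw [Finset.mem_filter] at hi
          rw [if_neg hi.2, pow_zero]
        rw [h2, mul_one]
        have h3 : Finset.univ.filter (fun i => i ∈ S2) = S2 := by
          ext i; simp
        rw [h3]
        exact Finset.prod_congr rfl fun i hi => by rw [if_pos hi]
      rw [h1, ← Finset.prod_mul_distrib]
      exact Finset.prod_congr rfl fun i _ => by rw [← pow_add, hb i]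
    rw [heq]
    exact Ideal.mul_mem_right _ _ (Ideal.subset_span ⟨S2, hS2Δ, rfl⟩)
end

section
/- Let Δ be a simplicial complex on [n] with no free face. Then for every face F ∈ Δ and every l ∈ [n] with l ∉ F, there exists a facet G of Δ such that F ⊆ G and l ∉ G. -/
/-- If Δ has no free face, then for every face `F` and `l ∉ F` there is a
facet `G ⊇ F` with `l ∉ G`. -/
theorem stmt_6 {n : ℕ} (Δ : Set (Finset (Fin n))) (hΔ : IsSimplicialComplex Δ)
    (hfree : ¬ ∃ F, IsFreeFace Δ F) :
    ∀ F ∈ Δ, ∀ l : Fin n, l ∉ F → ∃ G, IsFacet Δ G ∧ F ⊆ G ∧ l ∉ G := by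
  intro F hF l hl
  -- maximal face F' ⊇ F avoiding l
  have hSfin : (Set.univ : Set (Finset (Fin n))).Finite := Set.finite_univ
  obtain ⟨F', ⟨hF'Δ, hFF', hlF'⟩, hmax⟩ :=
    ((hSfin.subset (Set.subset_univ {H | H ∈ Δ ∧ F ⊆ H ∧ l ∉ H})).exists_maximalFor
      Finset.card _ ⟨F, hF, subset_rfl, hl⟩)
  -- maximality of F' as subset: any member of S containing F' equals F'
  have hmaxS : ∀ H, H ∈ Δ → F ⊆ H → l ∉ H → F' ⊆ H → H = F' := by
    intro H h1 h2 h3 h4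
    exact (Finset.eq_of_subset_of_card_le h4
      (hmax ⟨h1, h2, h3⟩ (Finset.card_le_card h4))).symm
  -- maximal face G' ⊇ F' : it is a facet
  obtain ⟨G', ⟨hG'Δ, hF'G'⟩, hmax2⟩ :=
    ((hSfin.subset (Set.subset_univ {H | H ∈ Δ ∧ F' ⊆ H})).exists_maximalFor
      Finset.card _ ⟨F', hF'Δ, subset_rfl⟩)
  have hfacet : IsFacet Δ G' := by
    refine ⟨hG'Δ, fun H h1 h2 => ?_⟩
    exact (Finset.eq_of_subset_of_card_le h2
      (hmax2 ⟨h1, hF'G'.trans h2⟩ (Finset.card_le_card h2))).symm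
  by_cases hlG' : l ∈ G'
  · -- F' would be a free face: contradiction
    exfalso
    apply hfree
    refine ⟨F', hF'Δ, l, hlF', ?_⟩
    have key : ∀ G, IsFacet Δ G → F' ⊆ G → G = insert l F' := by
      intro G hG hFG
      have hlG : l ∈ G := by
        by_contra hlG
        have := hmaxS G hG.1 (hFF'.trans hFG) hlG hFG
        -- then F' is a facet, but G' ∈ Δ contains F'; F' ≠ G' since l ∈ G'
        have hG'eq : G' = F' := by
          rw [← this]; exact hG.2 G' hG'Δ (this ▸ hF'G')
        exact hlF' (hG'eq ▸ hlG')
      have herase : G.erase l = F' := by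
        apply hmaxS
        · exact hΔ.2 G hG.1 _ (Finset.erase_subset _ _)
        · exact fun x hx => Finset.mem_erase.2 ⟨fun h => hl (h ▸ hx), hFF'.trans hFG hx⟩
        · exact Finset.notMem_erase _ _
        · exact fun x hx => Finset.mem_erase.2 ⟨fun h => hlF' (h ▸ hx), hFG hx⟩
      rw [← herase, Finset.insert_erase hlG]
    have hG'ins : G' = insert l F' := key G' hfacet hF'G'
    exact ⟨hG'ins ▸ hfacet, key⟩
  · exact ⟨G', hfacet, hFF'.trans hF'G', hlG'⟩
end

section
/- Let V ⊆ [n], let Δ' be a simplicial complex on V, and let Δ = Δ' * 2^{[n]∖V} be the simplicial complex on [n] given by F ∈ Δ ⇔ F ∩ V ∈ Δ'. Let S = K[[x_1, …, x_n]] and S' = K[[x_i | i ∈ V]]. Then the equality of ideals I_Δ^[2] : I_Δ = I_Δ^[2] + (∏_{i∈V} x_i) holds in S if and only if the equality I_{Δ'}^[2] : I_{Δ'} = I_{Δ'}^[2] + (∏_{i∈V} x_i) holds in S'. -/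
open MvPowerSeries Finset Finsupp

/-- The Stanley–Reisner ideal of a complex `Δ'` on a vertex subset `V ⊆ [n]`,
inside `S' = K[[x_i ∣ i ∈ V]]`. -/
noncomputable def SRIdealOn (K : Type*) [Field K] {n : ℕ} (V : Finset (Fin n))
    (Δ' : Set (Finset (Fin n))) : Ideal (MvPowerSeries {i : Fin n // i ∈ V} K) :=
  Ideal.span ((fun F : Finset {i : Fin n // i ∈ V} =>
      ∏ i ∈ F, (X i : MvPowerSeries {i : Fin n // i ∈ V} K)) ''
    {F | F.map (Function.Embedding.subtype fun i => i ∈ V) ∉ Δ'})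

/-- The second Frobenius power of the Stanley–Reisner ideal of `Δ'` inside
`S' = K[[x_i ∣ i ∈ V]]`. -/
noncomputable def SRIdeal2On (K : Type*) [Field K] {n : ℕ} (V : Finset (Fin n))
    (Δ' : Set (Finset (Fin n))) : Ideal (MvPowerSeries {i : Fin n // i ∈ V} K) :=
  Ideal.span ((fun F : Finset {i : Fin n // i ∈ V} =>
      ∏ i ∈ F, (X i : MvPowerSeries {i : Fin n // i ∈ V} K) ^ 2) ''
    {F | F.map (Function.Embedding.subtype fun i => i ∈ V) ∉ Δ'})

noncomputable def ind {σ : Type*} (F : Finset σ) : σ →₀ ℕ := ∑ i ∈ F, Finsupp.single i 1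

lemma ind_apply {σ : Type*} [DecidableEq σ] (F : Finset σ) (i : σ) :
    ind F i = if i ∈ F then 1 else 0 := by
  rw [ind, Finset.sum_apply']
  simp [Finsupp.single_apply]

section AuxSR
set_option linter.unusedSectionVars false
variable {σ : Type*} {K : Type*} [Field K]

lemma prod_X_eq (F : Finset σ) :
    (∏ i ∈ F, (X i : MvPowerSeries σ K)) = monomial (ind F) 1 := by
  classical
  induction F using Finset.induction with
  | empty => simp [ind, MvPowerSeries.monomial_zero_one]
  | insert _ _ h ih =>
      rw [Finset.prod_insert h, ih, X_def, monomial_mul_monomial, one_mul, ind, ind,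
        Finset.sum_insert h]

lemma prod_X_sq_eq (F : Finset σ) :
    (∏ i ∈ F, (X i : MvPowerSeries σ K) ^ 2) = monomial (2 • ind F) 1 := by
  classical
  induction F using Finset.induction with
  | empty => simp [ind, MvPowerSeries.monomial_zero_one]
  | insert _ _ h ih =>
      rw [Finset.prod_insert h, ih, X_pow_eq, monomial_mul_monomial, one_mul, ind, ind,
        Finset.sum_insert h, smul_add, Finsupp.smul_single]
      norm_num

lemma mem_span_monomials (M : Finset (σ →₀ ℕ)) (f : MvPowerSeries σ K) :
    f ∈ Ideal.span ((fun d => monomial d (1 : K)) '' ↑M) ↔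
      ∀ e, coeff e f ≠ 0 → ∃ d ∈ M, d ≤ e := by
  classical
  constructor
  · intro hf
    refine Submodule.span_induction ?_ ?_ ?_ ?_ hf
    · rintro x ⟨d, hd, rfl⟩ e he
      rw [coeff_monomial] at he
      by_cases h : e = d
      · exact ⟨d, by simpa using hd, h.ge⟩
      · simp [h] at he
    · simp
    · intro x y _ _ hx hy e he
      rw [map_add] at he
      by_cases hxe : coeff e x ≠ 0
      · exact hx e hxe
      · push_neg at hxe
        exact hy e (by rw [hxe, zero_add] at he; exact he)
    · intro a x _ hx e he
      rw [smul_eq_mul, coeff_mul] at he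
      obtain ⟨p, hp, hne⟩ := Finset.exists_ne_zero_of_sum_ne_zero he
      obtain ⟨d, hd, hde⟩ := hx p.2 (right_ne_zero_of_mul hne)
      rw [Finset.HasAntidiagonal.mem_antidiagonal] at hp
      exact ⟨d, hd, hde.trans (hp ▸ le_add_self)⟩
  · intro h
    let sel : (σ →₀ ℕ) → (σ →₀ ℕ) := fun e => if h2 : ∃ d ∈ M, d ≤ e then h2.choose else 0
    have hsel_mem : ∀ e (h2 : ∃ d ∈ M, d ≤ e), sel e ∈ M ∧ sel e ≤ e := by
      intro e h2
      simp only [sel, dif_pos h2]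
      exact ⟨h2.choose_spec.1, h2.choose_spec.2⟩
    let g : (σ →₀ ℕ) → MvPowerSeries σ K := fun d u =>
      if (∃ d' ∈ M, d' ≤ u + d) ∧ sel (u + d) = d then coeff (u + d) f else 0
    have hgco : ∀ d u, coeff u (g d) =
        if (∃ d' ∈ M, d' ≤ u + d) ∧ sel (u + d) = d then coeff (u + d) f else 0 :=
      fun _ _ => rfl
    have hterm : ∀ (e d : σ →₀ ℕ), coeff e (g d * monomial d 1) =
        if d ≤ e ∧ (∃ d' ∈ M, d' ≤ e) ∧ sel e = d then coeff e f else 0 := by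
      intro e d
      rw [coeff_mul_monomial]
      by_cases hde : d ≤ e
      · rw [if_pos hde, mul_one, hgco]
        have he' : e - d + d = e := tsub_add_cancel_of_le hde
        rw [he']
        by_cases hc : (∃ d' ∈ M, d' ≤ e) ∧ sel e = d
        · rw [if_pos hc, if_pos ⟨hde, hc⟩]
        · rw [if_neg hc, if_neg fun hcon => hc ⟨hcon.2.1, hcon.2.2⟩]
      · rw [if_neg hde, if_neg fun hcon => hde hcon.1]
    have hfg : f = ∑ d ∈ M, g d * monomial d 1 := by
      ext e
      rw [map_sum]
      by_cases hex : ∃ d ∈ M, d ≤ e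
      · symm
        rw [Finset.sum_eq_single (sel e)]
        · rw [hterm, if_pos ⟨(hsel_mem e hex).2, hex, rfl⟩]
        · intro b _ hb
          rw [hterm, if_neg (fun hc => hb hc.2.2.symm)]
        · intro hns
          exact absurd (hsel_mem e hex).1 hns
      · have h0 : coeff e f = 0 := by
          by_contra hc
          exact hex (h e hc)
        rw [h0]
        symm
        refine Finset.sum_eq_zero fun d _ => ?_
        rw [hterm, if_neg fun hcon => hex hcon.2.1]
    rw [hfg]
    exact Ideal.sum_mem _ fun d hd =>
      Ideal.mul_mem_left _ _ (Ideal.subset_span ⟨d, by simpa using hd, rfl⟩)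

lemma mem_span_monomials_set (M : Set (σ →₀ ℕ)) (hM : M.Finite) (f : MvPowerSeries σ K) :
    f ∈ Ideal.span ((fun d => monomial d (1 : K)) '' M) ↔
      ∀ e, coeff e f ≠ 0 → ∃ d ∈ M, d ≤ e := by
  rw [show ((fun d => monomial d (1 : K)) '' M) =
      ((fun d => monomial d (1 : K)) '' ↑hM.toFinset) by rw [hM.coe_toFinset],
    mem_span_monomials]
  simp only [Set.Finite.mem_toFinset]

lemma mem_colon_span_iff {R : Type*} [CommRing R] (I : Ideal R) (S : Set R) (s : R) :
    s ∈ Submodule.colon I (Ideal.span S) ↔ ∀ x ∈ S, s * x ∈ I := by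
  rw [Submodule.mem_colon]
  constructor
  · intro h x hx
    exact h x (Ideal.subset_span hx)
  · intro h p hp
    refine Submodule.span_induction (fun x hx => h x hx) (by simp) ?_ ?_ hp
    · intro x y _ _ hx hy
      rw [smul_add]
      exact I.add_mem hx hy
    · intro a x _ hx
      rw [smul_comm]
      exact I.smul_mem a hx

variable [Fintype σ]

lemma mem_SR2_iff (N : Set (Finset σ)) (f : MvPowerSeries σ K) :
    f ∈ Ideal.span ((fun F : Finset σ => ∏ i ∈ F, (X i : MvPowerSeries σ K) ^ 2) '' N) ↔
      ∀ e, coeff e f ≠ 0 → ∃ G ∈ N, 2 • ind G ≤ e := by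
  have himg : (fun F : Finset σ => ∏ i ∈ F, (X i : MvPowerSeries σ K) ^ 2) '' N =
      (fun d => monomial d (1 : K)) '' ((fun F => (2 : ℕ) • ind F) '' N) := by
    rw [Set.image_image]
    exact Set.image_congr fun F _ => prod_X_sq_eq F
  rw [himg, mem_span_monomials_set _ (Set.toFinite _)]
  constructor <;> intro h e he
  · obtain ⟨d, ⟨F, hF, rfl⟩, hle⟩ := h e he
    exact ⟨F, hF, hle⟩
  · obtain ⟨F, hF, hle⟩ := h e he
    exact ⟨2 • ind F, ⟨F, hF, rfl⟩, hle⟩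

lemma mem_SR2_sup_iff (N : Set (Finset σ)) (W : Finset σ) (f : MvPowerSeries σ K) :
    f ∈ Ideal.span ((fun F : Finset σ => ∏ i ∈ F, (X i : MvPowerSeries σ K) ^ 2) '' N) ⊔
        Ideal.span {∏ i ∈ W, (X i : MvPowerSeries σ K)} ↔
      ∀ e, coeff e f ≠ 0 → (∃ G ∈ N, 2 • ind G ≤ e) ∨ ind W ≤ e := by
  have himg : (fun F : Finset σ => ∏ i ∈ F, (X i : MvPowerSeries σ K) ^ 2) '' N ∪
      {∏ i ∈ W, (X i : MvPowerSeries σ K)} =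
      (fun d => monomial d (1 : K)) '' ((fun F => (2 : ℕ) • ind F) '' N ∪ {ind W}) := by
    rw [Set.image_union, Set.image_image, Set.image_singleton, prod_X_eq]
    congr 1
    exact Set.image_congr fun F _ => prod_X_sq_eq F
  rw [← Ideal.span_union, himg, mem_span_monomials_set _ (Set.toFinite _)]
  constructor <;> intro h e he
  · obtain ⟨d, hd, hle⟩ := h e he
    rcases hd with ⟨F, hF, rfl⟩ | rfl
    · exact Or.inl ⟨F, hF, hle⟩
    · exact Or.inr hle
  · rcases h e he with ⟨F, hF, hle⟩ | hle
    · exact ⟨_, Or.inl ⟨F, hF, rfl⟩, hle⟩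
    · exact ⟨_, Or.inr rfl, hle⟩

lemma mem_colon_SR_iff (N : Set (Finset σ)) (f : MvPowerSeries σ K) :
    f ∈ Submodule.colon
        (Ideal.span ((fun F : Finset σ => ∏ i ∈ F, (X i : MvPowerSeries σ K) ^ 2) '' N))
        (Ideal.span ((fun F : Finset σ => ∏ i ∈ F, (X i : MvPowerSeries σ K)) '' N)) ↔
      ∀ e, coeff e f ≠ 0 → ∀ F ∈ N, ∃ G ∈ N, 2 • ind G ≤ e + ind F := by
  rw [mem_colon_span_iff]
  constructor
  · intro h e he F hF
    have hmem := h _ ⟨F, hF, rfl⟩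
    rw [mem_SR2_iff] at hmem
    refine hmem (e + ind F) ?_
    beta_reduce
    rw [prod_X_eq, coeff_add_mul_monomial, mul_one]
    exact he
  · intro h x hx
    obtain ⟨F, hF, rfl⟩ := hx
    rw [mem_SR2_iff]
    intro e' he'
    beta_reduce at he'
    rw [prod_X_eq, coeff_mul_monomial] at he'
    by_cases hle : ind F ≤ e'
    · rw [if_pos hle, mul_one] at he'
      have := h _ he' F hF
      rwa [tsub_add_cancel_of_le hle] at this
    · rw [if_neg hle] at he'
      exact absurd rfl he'

omit [Fintype σ] in
lemma forall_coeff_monomial_iff (e : σ →₀ ℕ) (p : (σ →₀ ℕ) → Prop) :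
    (∀ e', coeff e' (monomial e (1 : K)) ≠ 0 → p e') ↔ p e := by
  classical
  constructor
  · intro h
    exact h e (by rw [coeff_monomial_same]; exact one_ne_zero)
  · intro h e' he'
    rw [coeff_monomial] at he'
    by_cases hc : e' = e
    · rwa [hc]
    · simp [hc] at he'

lemma side_iff (N : Set (Finset σ)) (W : Finset σ) :
    (Submodule.colon
        (Ideal.span ((fun F : Finset σ => ∏ i ∈ F, (X i : MvPowerSeries σ K) ^ 2) '' N))
        (Ideal.span ((fun F : Finset σ => ∏ i ∈ F, (X i : MvPowerSeries σ K)) '' N)) =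
      Ideal.span ((fun F : Finset σ => ∏ i ∈ F, (X i : MvPowerSeries σ K) ^ 2) '' N) ⊔
        Ideal.span {∏ i ∈ W, (X i : MvPowerSeries σ K)}) ↔
    ∀ e : σ →₀ ℕ, (∀ F ∈ N, ∃ G ∈ N, 2 • ind G ≤ e + ind F) ↔
      ((∃ G ∈ N, 2 • ind G ≤ e) ∨ ind W ≤ e) := by
  rw [SetLike.ext_iff]
  constructor
  · intro h e
    have := h (monomial e (1 : K))
    rw [mem_colon_SR_iff, mem_SR2_sup_iff, forall_coeff_monomial_iff,
      forall_coeff_monomial_iff] at this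
    exact this
  · intro h f
    rw [mem_colon_SR_iff, mem_SR2_sup_iff]
    exact ⟨fun hf e he => (h e).1 (hf e he), fun hf e he => (h e).2 (hf e he)⟩

end AuxSR

lemma bridge {n : ℕ} (V : Finset (Fin n)) (Δ' Δ : Set (Finset (Fin n)))
    (hΔ : ∀ F : Finset (Fin n), F ∈ Δ ↔ F ∩ V ∈ Δ') :
    (∀ e : Fin n →₀ ℕ,
      (∀ F ∈ {F : Finset (Fin n) | F ∉ Δ}, ∃ G ∈ {F : Finset (Fin n) | F ∉ Δ},
          2 • ind G ≤ e + ind F) ↔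
        ((∃ G ∈ {F : Finset (Fin n) | F ∉ Δ}, 2 • ind G ≤ e) ∨ ind V ≤ e)) ↔
    (∀ e' : {i : Fin n // i ∈ V} →₀ ℕ,
      (∀ F ∈ {F : Finset {i : Fin n // i ∈ V} |
            F.map (Function.Embedding.subtype fun i => i ∈ V) ∉ Δ'},
          ∃ G ∈ {F : Finset {i : Fin n // i ∈ V} |
            F.map (Function.Embedding.subtype fun i => i ∈ V) ∉ Δ'},
          2 • ind G ≤ e' + ind F) ↔
        ((∃ G ∈ {F : Finset {i : Fin n // i ∈ V} |
            F.map (Function.Embedding.subtype fun i => i ∈ V) ∉ Δ'}, 2 • ind G ≤ e') ∨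
          ind (univ : Finset {i : Fin n // i ∈ V}) ≤ e')) := by
  classical
  set em : {i : Fin n // i ∈ V} ↪ Fin n := Function.Embedding.subtype fun i => i ∈ V with hem
  have hmapV : ∀ F' : Finset {i : Fin n // i ∈ V}, F'.map em ⊆ V := by
    intro F' i hi
    rcases Finset.mem_map.1 hi with ⟨j, _, rfl⟩
    exact j.2
  have hmem_map : ∀ (F' : Finset {i : Fin n // i ∈ V}) (j : {i : Fin n // i ∈ V}),
      j.1 ∈ F'.map em ↔ j ∈ F' := by
    intro F' j
    constructor
    · intro hj
      rcases Finset.mem_map.1 hj with ⟨a, ha, hav⟩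
      exact (Subtype.ext hav : a = j) ▸ ha
    · intro hj
      exact Finset.mem_map_of_mem em hj
  have hnf_iff : ∀ F' : Finset {i : Fin n // i ∈ V}, (F'.map em ∉ Δ ↔ F'.map em ∉ Δ') := by
    intro F'
    rw [hΔ (F'.map em), Finset.inter_eq_left.2 (hmapV F')]
  have hsub : ∀ G : Finset (Fin n), ((G ∩ V).subtype (· ∈ V)).map em = G ∩ V := by
    intro G
    rw [hem, Finset.subtype_map]
    exact Finset.filter_true_of_mem fun x hx => (Finset.mem_inter.1 hx).2
  have hmem_sub : ∀ (G : Finset (Fin n)) (j : {i : Fin n // i ∈ V}),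
      j ∈ (G ∩ V).subtype (· ∈ V) ↔ j.1 ∈ G := by
    intro G j
    simp [Finset.mem_subtype, j.2]
  have hp : ∀ e : Fin n →₀ ℕ,
      (∀ F ∈ {F : Finset (Fin n) | F ∉ Δ}, ∃ G ∈ {F : Finset (Fin n) | F ∉ Δ},
          2 • ind G ≤ e + ind F) ↔
      (∀ F' ∈ {F : Finset {i : Fin n // i ∈ V} | F.map em ∉ Δ'},
          ∃ G' ∈ {F : Finset {i : Fin n // i ∈ V} | F.map em ∉ Δ'},
          2 • ind G' ≤ Finsupp.subtypeDomain (fun i => i ∈ V) e + ind F') := by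
    intro e
    constructor
    · intro h F' hF'
      obtain ⟨G, hG, hle⟩ := h (F'.map em) ((hnf_iff F').2 hF')
      refine ⟨(G ∩ V).subtype (· ∈ V), ?_, ?_⟩
      · show _ ∉ Δ'
        rw [hsub G]
        exact fun hc => hG ((hΔ G).2 hc)
      · rw [Finsupp.le_def]
        intro j
        have hj := Finsupp.le_def.1 hle j.1
        simp only [Finsupp.smul_apply, Finsupp.add_apply, ind_apply, smul_eq_mul,
          hmem_map F' j] at hj
        simp only [Finsupp.smul_apply, Finsupp.add_apply, ind_apply, smul_eq_mul,
          Finsupp.subtypeDomain_apply, hmem_sub G j]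
        exact hj
    · intro h F hF
      have hF' : ((F ∩ V).subtype (· ∈ V)).map em ∉ Δ' := by
        rw [hsub F]
        exact fun hc => hF ((hΔ F).2 hc)
      obtain ⟨G', hG', hle⟩ := h _ hF'
      refine ⟨G'.map em, (hnf_iff G').2 hG', ?_⟩
      rw [Finsupp.le_def]
      intro i
      simp only [Finsupp.smul_apply, Finsupp.add_apply, ind_apply, smul_eq_mul]
      by_cases hiV : i ∈ V
      · have hj := Finsupp.le_def.1 hle ⟨i, hiV⟩
        simp only [Finsupp.smul_apply, Finsupp.add_apply, ind_apply, smul_eq_mul,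
          Finsupp.subtypeDomain_apply, hmem_sub F ⟨i, hiV⟩, ← hmem_map G' ⟨i, hiV⟩] at hj
        exact hj
      · have hnG : i ∉ G'.map em := fun hc => hiV (hmapV G' hc)
        simp only [hnG, if_false, mul_zero]
        exact Nat.zero_le _
  have hq : ∀ e : Fin n →₀ ℕ,
      ((∃ G ∈ {F : Finset (Fin n) | F ∉ Δ}, 2 • ind G ≤ e) ∨ ind V ≤ e) ↔
      ((∃ G' ∈ {F : Finset {i : Fin n // i ∈ V} | F.map em ∉ Δ'},
          2 • ind G' ≤ Finsupp.subtypeDomain (fun i => i ∈ V) e) ∨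
        ind (univ : Finset {i : Fin n // i ∈ V}) ≤ Finsupp.subtypeDomain (fun i => i ∈ V) e) := by
    intro e
    constructor
    · rintro (⟨G, hG, hle⟩ | hV)
      · refine Or.inl ⟨(G ∩ V).subtype (· ∈ V), ?_, ?_⟩
        · show _ ∉ Δ'
          rw [hsub G]
          exact fun hc => hG ((hΔ G).2 hc)
        · rw [Finsupp.le_def]
          intro j
          have hj := Finsupp.le_def.1 hle j.1
          simp only [Finsupp.smul_apply, ind_apply, smul_eq_mul] at hj
          simp only [Finsupp.smul_apply, ind_apply, smul_eq_mul,
            Finsupp.subtypeDomain_apply, hmem_sub G j]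
          exact hj
      · refine Or.inr ?_
        rw [Finsupp.le_def]
        intro j
        have hj := Finsupp.le_def.1 hV j.1
        simp only [ind_apply, j.2, if_true, Finset.mem_univ] at hj ⊢
        simpa [Finsupp.subtypeDomain_apply] using hj
    · rintro (⟨G', hG', hle⟩ | hV)
      · refine Or.inl ⟨G'.map em, (hnf_iff G').2 hG', ?_⟩
        rw [Finsupp.le_def]
        intro i
        simp only [Finsupp.smul_apply, ind_apply, smul_eq_mul]
        by_cases hiV : i ∈ V
        · have hj := Finsupp.le_def.1 hle ⟨i, hiV⟩
          simp only [Finsupp.smul_apply, ind_apply, smul_eq_mul,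
            Finsupp.subtypeDomain_apply, ← hmem_map G' ⟨i, hiV⟩] at hj
          exact hj
        · have hnG : i ∉ G'.map em := fun hc => hiV (hmapV G' hc)
          simp only [hnG, if_false, mul_zero]
          exact Nat.zero_le _
      · refine Or.inr ?_
        rw [Finsupp.le_def]
        intro i
        rw [ind_apply]
        by_cases hiV : i ∈ V
        · have hj := Finsupp.le_def.1 hV ⟨i, hiV⟩
          simp only [ind_apply, Finset.mem_univ, if_true,
            Finsupp.subtypeDomain_apply] at hj
          simpa [hiV] using hj
        · simp [hiV]
  constructor
  · intro hL e'
    have h3 := (hp (Finsupp.extendDomain e')).symm.trans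
      ((hL _).trans (hq (Finsupp.extendDomain e')))
    rwa [Finsupp.subtypeDomain_extendDomain] at h3
  · intro hR e
    exact (hp e).trans ((hR _).trans (hq e).symm)

/-- For `Δ = Δ' * 2^{[n]∖V}`, the equality
`I_Δ^[2] : I_Δ = I_Δ^[2] + (∏_{i∈V} x_i)` holds in `S = K[[x_1,…,x_n]]` iff
`I_{Δ'}^[2] : I_{Δ'} = I_{Δ'}^[2] + (∏_{i∈V} x_i)` holds in `S' = K[[x_i ∣ i ∈ V]]`. -/
theorem stmt_10 (K : Type*) [Field K] {n : ℕ} (V : Finset (Fin n))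
    (Δ' : Set (Finset (Fin n))) (hΔ' : IsSimplicialComplex Δ')
    (hΔ'V : ∀ F ∈ Δ', F ⊆ V)
    (Δ : Set (Finset (Fin n))) (hΔ : ∀ F : Finset (Fin n), F ∈ Δ ↔ F ∩ V ∈ Δ') :
    (Submodule.colon (SRIdeal2 K Δ) (SRIdeal K Δ) =
        SRIdeal2 K Δ ⊔ Ideal.span {∏ i ∈ V, (X i : MvPowerSeries (Fin n) K)}) ↔
    (Submodule.colon (SRIdeal2On K V Δ') (SRIdealOn K V Δ') =
        SRIdeal2On K V Δ' ⊔
          Ideal.span {∏ i : {i : Fin n // i ∈ V},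
            (X i : MvPowerSeries {i : Fin n // i ∈ V} K)}) := by
  classical
  unfold SRIdeal SRIdeal2 SRIdealOn SRIdeal2On
  rw [side_iff, side_iff]
  exact bridge V Δ' Δ hΔ
end
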